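/- Let g be a Lie algebra over a field k of characteristic zero, n a nilpotent Lie subalgebra of g, ζ : n → k a character (Lie algebra homomorphism to the abelian Lie algebra k), and M a g-module. If the vector x − ζ(x) acts locally nilpotently on M for every x ∈ n, if M ≠ 0, and if M is locally finite over n (every element of M generates a finite-dimensional n-submodule), then the space of Whittaker vectors Wh(M) := { m ∈ M | x·m = ζ(x)·m for all x ∈ n } is nonzero. -/

import Mathlib

attribute [local instance 100] LieRing.ofAssociativeRing

/-- Let `g` be a Lie algebra over a field `k` of characteristic zero, `n` a nilpotent Lie
subalgebra, `ζ : n → k` a character, and `M` a nonzero `g`-module on which each `x − ζ(x)`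
(`x ∈ n`) acts locally nilpotently and which is locally finite over `n`.  Then the space of
Whittaker vectors `Wh(M) = { m | x·m = ζ(x)·m  ∀ x ∈ n }` is nonzero. -/
theorem stmt2 (k : Type) [Field k] [CharZero k] (g : Type) [LieRing g] [LieAlgebra k g]
    (n : LieSubalgebra k g) [LieRing.IsNilpotent n] (ζ : n →ₗ⁅k⁆ k)
    (M : Type) [AddCommGroup M] [Module k M] [LieRingModule g M] [LieModule k g M]
    (hlocnil : ∀ (x : n) (m : M), ∃ N : ℕ, (fun m' => ⁅(x : g), m'⁆ - ζ x • m')^[N] m = 0)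
    (hnonzero : ∃ m : M, m ≠ 0)
    (hlocfin : ∀ m : M, ∃ S : Submodule k M, m ∈ S ∧ FiniteDimensional k S ∧
      ∀ (x : n), ∀ s ∈ S, ⁅(x : g), s⁆ ∈ S) :
    ∃ m : M, m ≠ 0 ∧ ∀ x : n, ⁅(x : g), m⁆ = ζ x • m := by
  obtain ⟨m, hm⟩ := hnonzero
  obtain ⟨S, hmS, hfd, hstab⟩ := hlocfin m
  -- The operator `s ↦ ⁅x, s⁆ - ζ x • s` on `S`.
  let T0 : n → Module.End k S := fun x =>
    { toFun := fun s => ⟨⁅(x : g), (s : M)⁆ - ζ x • (s : M),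
        sub_mem (hstab x s s.2) (S.smul_mem _ s.2)⟩
      map_add' := by
        intro a b
        apply Subtype.ext
        simp [lie_add, smul_add]
        abel
      map_smul' := by
        intro c a
        apply Subtype.ext
        simp [lie_smul, smul_comm c]
        module }
  have T0_apply : ∀ (x : n) (s : S), ((T0 x s : S) : M) = ⁅(x : g), (s : M)⁆ - ζ x • (s : M) :=
    fun _ _ => rfl
  let T : n →ₗ⁅k⁆ Module.End k S :=
  { toFun := T0
    map_add' := by
      intro x y
      apply LinearMap.ext; intro s
      apply Subtype.ext
      simp [T0_apply, add_lie, map_add, add_smul]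
      abel
    map_smul' := by
      intro c x
      apply LinearMap.ext; intro s
      apply Subtype.ext
      simp only [T0_apply, RingHom.id_apply, LinearMap.smul_apply, SetLike.val_smul,
        Submodule.coe_smul, map_smul, smul_lie, smul_eq_mul, smul_sub, mul_smul]
    map_lie' := by
      intro x y
      apply LinearMap.ext; intro s
      apply Subtype.ext
      have hζ : ζ ⁅x, y⁆ = 0 := by
        rw [LieHom.map_lie, Ring.lie_def, mul_comm, sub_self]
      simp only [LieHom.lie_apply, Ring.lie_def, LinearMap.sub_apply, Module.End.mul_apply]
      simp only [T0_apply, hζ, zero_smul, sub_zero, AddSubgroupClass.coe_sub,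
        SetLike.val_smul, lie_sub, lie_smul, smul_sub, smul_smul,
        LieSubalgebra.coe_bracket, lie_lie]
      rw [mul_comm (ζ y) (ζ x)]
      abel
    }
  have T_apply : ∀ (x : n) (s : S), (((T x) s : S) : M) = ⁅(x : g), (s : M)⁆ - ζ x • (s : M) :=
    fun _ _ => rfl
  -- Each `T x` is nilpotent on the finite-dimensional space `S`.
  have hTpow : ∀ (x : n) (N : ℕ) (s : S),
      (((T x) ^ N) s : M) = (fun m' => ⁅(x : g), m'⁆ - ζ x • m')^[N] (s : M) := by
    intro x N
    induction N with
    | zero => intro s; rfl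
    | succ N ih =>
      intro s
      rw [pow_succ, Module.End.mul_apply, Function.iterate_succ_apply, ih ((T x) s)]
      rfl
  have hTnil : ∀ x : n, IsNilpotent (T x) := by
    intro x
    let b := Module.finBasis k S
    -- for each s, there is an N killing it
    have key : ∀ s : S, ∃ N : ℕ, ∀ N' ≥ N, ((T x) ^ N') s = 0 := by
      intro s
      obtain ⟨N, hN⟩ := hlocnil x (s : M)
      refine ⟨N, fun N' hN' => ?_⟩
      apply Subtype.ext
      rw [hTpow]
      obtain ⟨d, rfl⟩ := Nat.exists_eq_add_of_le hN'
      rw [Nat.add_comm, Function.iterate_add_apply, hN]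
      -- iterate of the map on 0 is 0
      clear hN hN'
      induction d with
      | zero => rfl
      | succ d ih => rw [Function.iterate_succ_apply', ih]; simp
    choose Nf hNf using key
    classical
    let Nmax := (Finset.univ.sup fun i => Nf (b i))
    refine ⟨Nmax, ?_⟩
    apply b.ext
    intro i
    simp only [LinearMap.zero_apply]
    exact hNf (b i) Nmax (Finset.le_sup (f := fun i => Nf (b i)) (Finset.mem_univ i))
  -- Pass to the image of `T`, a finite-dimensional (hence Noetherian) Lie algebra.
  let E : LieSubalgebra k (Module.End k S) := T.range
  have hEfd : FiniteDimensional k E := by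
    have : FiniteDimensional k (Module.End k S) := inferInstance
    exact FiniteDimensional.finiteDimensional_submodule E.toSubmodule
  have hEnoeth : IsNoetherian k E := by infer_instance
  have hEnilp : ∀ y : E, IsNilpotent (LieModule.toEnd k E S y) := by
    intro y
    obtain ⟨x, hx⟩ := y.2
    have he : LieModule.toEnd k E S y = (y : Module.End k S) := LinearMap.ext fun s => rfl
    rw [he, ← hx]
    simpa using hTnil x
  have hSnilp : LieModule.IsNilpotent E S :=
    LieAlgebra.isEngelian_of_isNoetherian (R := k) (L := E) S hEnilp
  have hSnontriv : Nontrivial S := by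
    refine ⟨⟨m, hmS⟩, 0, ?_⟩
    intro h
    exact hm (congrArg Subtype.val h)
  have hmax : Nontrivial (LieModule.maxTrivSubmodule k E S) :=
    LieModule.nontrivial_max_triv_of_isNilpotent k E S
  obtain ⟨s₀, hs₀⟩ := exists_ne (0 : LieModule.maxTrivSubmodule k E S)
  have hs₀mem : ∀ y : E, ⁅y, (s₀ : S)⁆ = 0 := (LieModule.mem_maxTrivSubmodule k E S _).mp s₀.2
  have hs₀ne : ((s₀ : S) : M) ≠ 0 := by
    intro h
    apply hs₀
    apply Subtype.ext
    apply Subtype.ext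
    exact h
  refine ⟨((s₀ : S) : M), hs₀ne, ?_⟩
  intro x
  have h1 : ⁅(⟨T x, ⟨x, rfl⟩⟩ : E), (s₀ : S)⁆ = 0 := hs₀mem _
  have h2 : T x (s₀ : S) = 0 := h1
  have h3 : ((T x (s₀ : S) : S) : M) = 0 := by rw [h2]; rfl
  rw [T_apply] at h3
  exact sub_eq_zero.mp h3
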